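/- If f : ℝ³ → ℂ satisfies ‖x f‖_{L²} < ∞ and ‖|x|² f‖_{L²} < ∞, then ‖f‖_{L¹(ℝ³)} ≲ ‖x f‖_{L²}^{1/2} ‖|x|² f‖_{L²}^{1/2}, with an absolute implicit constant. -/

import Mathlib

open MeasureTheory Metric
open scoped ENNReal NNReal

local notation "E3" => EuclideanSpace ℝ (Fin 3)

lemma cs_step {f F : E3 → ℂ} (hf : Measurable f) (m : ℕ)
    (hF : ∀ x, (‖F x‖₊ : ℝ≥0∞) = (‖x‖₊ : ℝ≥0∞) ^ m * ‖f x‖₊)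
    {s : Set E3} (hs : MeasurableSet s) (hs0 : ∀ x ∈ s, x ≠ 0) :
    ∫⁻ x in s, (‖f x‖₊ : ℝ≥0∞) ∂volume ≤
      (∫⁻ x in s, (((‖x‖₊ : ℝ≥0∞) ^ m)⁻¹) ^ (2:ℝ) ∂volume) ^ ((1:ℝ)/2) *
        eLpNorm F 2 volume := by
  have hw : Measurable fun x : E3 => ((‖x‖₊ : ℝ≥0∞) ^ m)⁻¹ :=
    ((measurable_nnnorm.comp measurable_id).coe_nnreal_ennreal.pow_const m).inv
  have hg : Measurable fun x : E3 => ((‖x‖₊ : ℝ≥0∞) ^ m) * ‖f x‖₊ :=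
    ((measurable_nnnorm.comp measurable_id).coe_nnreal_ennreal.pow_const m).mul
      hf.nnnorm.coe_nnreal_ennreal
  have key : ∀ᵐ x ∂(volume.restrict s), (‖f x‖₊ : ℝ≥0∞) =
      ((‖x‖₊ : ℝ≥0∞) ^ m)⁻¹ * (((‖x‖₊ : ℝ≥0∞) ^ m) * ‖f x‖₊) := by
    refine ae_restrict_of_forall_mem hs ?_
    intro x hx
    have hx0 : (‖x‖₊ : ℝ≥0∞) ^ m ≠ 0 := by
      simp [pow_eq_zero_iff', nnnorm_eq_zero, hs0 x hx]
    have hxt : (‖x‖₊ : ℝ≥0∞) ^ m ≠ ⊤ := ENNReal.pow_ne_top ENNReal.coe_ne_top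
    rw [← mul_assoc, ENNReal.inv_mul_cancel hx0 hxt, one_mul]
  calc ∫⁻ x in s, (‖f x‖₊ : ℝ≥0∞) ∂volume
      = ∫⁻ x in s, ((‖x‖₊ : ℝ≥0∞) ^ m)⁻¹ * (((‖x‖₊ : ℝ≥0∞) ^ m) * ‖f x‖₊) ∂volume :=
        lintegral_congr_ae key
    _ ≤ (∫⁻ x in s, (((‖x‖₊ : ℝ≥0∞) ^ m)⁻¹) ^ (2:ℝ) ∂volume) ^ ((1:ℝ)/2) *
        (∫⁻ x in s, (((‖x‖₊ : ℝ≥0∞) ^ m) * ‖f x‖₊) ^ (2:ℝ) ∂volume) ^ ((1:ℝ)/2) :=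
        ENNReal.lintegral_mul_le_Lp_mul_Lq _
          ⟨by norm_num, by norm_num, by norm_num⟩ hw.aemeasurable hg.aemeasurable
    _ ≤ _ := by
        refine mul_le_mul_right ?_ _
        rw [eLpNorm_eq_lintegral_rpow_enorm_toReal (by norm_num) (by norm_num)]
        have ht : ((2:ℝ≥0∞).toReal) = (2:ℝ) := by norm_num
        rw [ht]
        refine ENNReal.rpow_le_rpow ?_ (by norm_num)
        refine le_trans (setLIntegral_le_lintegral _ _) (le_of_eq (lintegral_congr fun x => ?_))
        exact (congrArg (fun t : ℝ≥0∞ => t ^ (2:ℝ)) (hF x)).symm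


lemma annulus_bound (m : ℕ) {a b : ℝ} (ha : 0 < a) (hb : 0 ≤ b) :
    ∫⁻ x in ball (0:E3) b \ ball 0 a, (((‖x‖₊ : ℝ≥0∞) ^ m)⁻¹) ^ (2:ℝ) ∂volume ≤
      ENNReal.ofReal (((a ^ m)⁻¹) ^ 2 * b ^ 3) * volume (ball (0:E3) 1) := by
  have hpt : ∀ x ∈ ball (0:E3) b \ ball 0 a,
      (((‖x‖₊ : ℝ≥0∞) ^ m)⁻¹) ^ (2:ℝ) ≤ ENNReal.ofReal (((a ^ m)⁻¹) ^ 2) := by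
    intro x hx
    have hax : a ≤ ‖x‖ := by
      have := hx.2
      rw [mem_ball_zero_iff] at this
      linarith [not_lt.mp this]
    have h1 : ENNReal.ofReal (a ^ m) ≤ (‖x‖₊ : ℝ≥0∞) ^ m := by
      rw [← ENNReal.ofReal_coe_nnreal, coe_nnnorm, ← ENNReal.ofReal_pow (norm_nonneg x)]
      exact ENNReal.ofReal_le_ofReal (pow_le_pow_left₀ ha.le hax m)
    have h2 : ((‖x‖₊ : ℝ≥0∞) ^ m)⁻¹ ≤ ENNReal.ofReal ((a ^ m)⁻¹) := by
      rw [ENNReal.ofReal_inv_of_pos (pow_pos ha m)]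
      exact ENNReal.inv_le_inv' h1
    calc (((‖x‖₊ : ℝ≥0∞) ^ m)⁻¹) ^ (2:ℝ) ≤ (ENNReal.ofReal ((a ^ m)⁻¹)) ^ (2:ℝ) :=
          ENNReal.rpow_le_rpow h2 (by norm_num)
      _ = ENNReal.ofReal (((a ^ m)⁻¹) ^ (2:ℝ)) :=
          ENNReal.ofReal_rpow_of_nonneg (by positivity) (by norm_num)
      _ = ENNReal.ofReal (((a ^ m)⁻¹) ^ 2) := by
          rw [show ((a ^ m)⁻¹) ^ (2:ℝ) = ((a ^ m)⁻¹) ^ (2:ℕ) from Real.rpow_natCast _ 2]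
  calc ∫⁻ x in ball (0:E3) b \ ball 0 a, (((‖x‖₊ : ℝ≥0∞) ^ m)⁻¹) ^ (2:ℝ) ∂volume
      ≤ ∫⁻ _x in ball (0:E3) b \ ball 0 a, ENNReal.ofReal (((a ^ m)⁻¹) ^ 2) ∂volume :=
        setLIntegral_mono measurable_const hpt
    _ = ENNReal.ofReal (((a ^ m)⁻¹) ^ 2) * volume (ball (0:E3) b \ ball 0 a) :=
        setLIntegral_const _ _
    _ ≤ ENNReal.ofReal (((a ^ m)⁻¹) ^ 2) * volume (ball (0:E3) b) := by
        gcongr; exact Set.diff_subset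
    _ = ENNReal.ofReal (((a ^ m)⁻¹) ^ 2) * (ENNReal.ofReal (b ^ 3) * volume (ball (0:E3) 1)) := by
        rw [Measure.addHaar_ball volume (0:E3) hb]
        congr 2
        simp [finrank_euclideanSpace]
    _ = ENNReal.ofReal (((a ^ m)⁻¹) ^ 2 * b ^ 3) * volume (ball (0:E3) 1) := by
        rw [← mul_assoc, ← ENNReal.ofReal_mul (by positivity)]

lemma cover_inner {R : ℝ} (hR : 0 < R) {x : E3} (hx : x ∈ ball (0:E3) R \ {0}) :
    ∃ n : ℕ, x ∈ ball (0:E3) (R * (2⁻¹:ℝ) ^ n) \ ball 0 (R * (2⁻¹:ℝ) ^ (n+1)) := by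
  obtain ⟨hxR, hx0⟩ := hx
  rw [mem_ball_zero_iff] at hxR
  have hx0' : 0 < ‖x‖ := norm_pos_iff.mpr (by simpa using hx0)
  have hex : ∃ n : ℕ, R * (2⁻¹:ℝ) ^ (n+1) ≤ ‖x‖ := by
    obtain ⟨n, hn⟩ := exists_pow_lt_of_lt_one (div_pos hx0' hR) (by norm_num : (2⁻¹:ℝ) < 1)
    refine ⟨n, ?_⟩
    have h1 : R * (2⁻¹:ℝ) ^ n < ‖x‖ := by
      rw [mul_comm, ← lt_div_iff₀ hR]; exact hn
    have h2 : R * (2⁻¹:ℝ) ^ (n+1) ≤ R * (2⁻¹:ℝ) ^ n := by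
      have hp : (0:ℝ) < (2⁻¹:ℝ) ^ n := by positivity
      rw [pow_succ]; nlinarith
    linarith
  refine ⟨Nat.find hex, ?_, ?_⟩
  · rw [mem_ball_zero_iff]
    rcases Nat.eq_zero_or_pos (Nat.find hex) with h | h
    · rw [h]; simpa using hxR
    · obtain ⟨k, hk⟩ := Nat.exists_eq_succ_of_ne_zero h.ne'
      have := Nat.find_min hex (m := k) (by omega)
      push_neg at this
      rw [hk]; exact this
  · rw [mem_ball_zero_iff]
    exact not_lt.mpr (Nat.find_spec hex)

lemma cover_outer {R : ℝ} (hR : 0 < R) {x : E3} (hx : x ∈ (ball (0:E3) R)ᶜ) :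
    ∃ n : ℕ, x ∈ ball (0:E3) (R * (2:ℝ) ^ (n+1)) \ ball 0 (R * (2:ℝ) ^ n) := by
  rw [Set.mem_compl_iff, mem_ball_zero_iff, not_lt] at hx
  have hex : ∃ n : ℕ, ‖x‖ < R * (2:ℝ) ^ (n+1) := by
    obtain ⟨n, hn⟩ := pow_unbounded_of_one_lt (‖x‖ / R) (by norm_num : (1:ℝ) < 2)
    refine ⟨n, ?_⟩
    have : ‖x‖ < R * 2 ^ n := by rw [mul_comm, ← div_lt_iff₀ hR]; exact hn
    have h2 : R * (2:ℝ) ^ n ≤ R * 2 ^ (n+1) := by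
      have hp : (0:ℝ) < (2:ℝ) ^ n := by positivity
      rw [pow_succ]; nlinarith
    linarith
  refine ⟨Nat.find hex, ?_, ?_⟩
  · rw [mem_ball_zero_iff]; exact Nat.find_spec hex
  · rw [mem_ball_zero_iff, not_lt]
    rcases Nat.eq_zero_or_pos (Nat.find hex) with h | h
    · rw [h]; simpa using hx
    · obtain ⟨k, hk⟩ := Nat.exists_eq_succ_of_ne_zero h.ne'
      have := Nat.find_min hex (m := k) (by omega)
      push_neg at this
      rw [hk]; exact this

lemma geo_half : ∑' n : ℕ, (2⁻¹ : ℝ≥0∞) ^ n = 2 := by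
  rw [ENNReal.tsum_geometric, ENNReal.one_sub_inv_two, inv_inv]

lemma ofReal_half : ENNReal.ofReal (2⁻¹ : ℝ) = 2⁻¹ := by
  rw [ENNReal.ofReal_inv_of_pos (by norm_num)]
  norm_num

lemma L1wk_inner_sum {R : ℝ} (hR : 0 < R) :
    ∫⁻ x in ball (0:E3) R \ {0}, (((‖x‖₊ : ℝ≥0∞) ^ 1)⁻¹) ^ (2:ℝ) ∂volume ≤
      8 * ENNReal.ofReal R * volume (ball (0:E3) 1) := by
  calc ∫⁻ x in ball (0:E3) R \ {0}, (((‖x‖₊ : ℝ≥0∞) ^ 1)⁻¹) ^ (2:ℝ) ∂volume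
      ≤ ∫⁻ x in ⋃ n : ℕ, (ball (0:E3) (R * (2⁻¹:ℝ) ^ n) \ ball 0 (R * (2⁻¹:ℝ) ^ (n+1))),
          (((‖x‖₊ : ℝ≥0∞) ^ 1)⁻¹) ^ (2:ℝ) ∂volume :=
        lintegral_mono_set (fun x hx => Set.mem_iUnion.mpr (cover_inner hR hx))
    _ ≤ ∑' n : ℕ, ∫⁻ x in ball (0:E3) (R * (2⁻¹:ℝ) ^ n) \ ball 0 (R * (2⁻¹:ℝ) ^ (n+1)),
          (((‖x‖₊ : ℝ≥0∞) ^ 1)⁻¹) ^ (2:ℝ) ∂volume := lintegral_iUnion_le _ _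
    _ ≤ ∑' n : ℕ, (4 * ENNReal.ofReal R * volume (ball (0:E3) 1)) * (2⁻¹:ℝ≥0∞) ^ n := by
        refine ENNReal.tsum_le_tsum fun n => ?_
        refine le_trans (annulus_bound 1 (by positivity) (by positivity)) ?_
        have hp : ((2⁻¹:ℝ) ^ n) ≠ 0 := by positivity
        have harg : (((R * (2⁻¹:ℝ) ^ (n+1)) ^ 1)⁻¹) ^ 2 * (R * (2⁻¹:ℝ) ^ n) ^ 3
            = 4 * R * (2⁻¹:ℝ) ^ n := by
          rw [pow_succ]
          field_simp
          ring
        rw [harg]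
        rw [show (4:ℝ) * R * (2⁻¹:ℝ) ^ n = (4 * R) * ((2⁻¹:ℝ) ^ n) from by ring,
          ENNReal.ofReal_mul (by positivity), ENNReal.ofReal_pow (by norm_num), ofReal_half,
          ENNReal.ofReal_mul (by norm_num)]
        rw [show ENNReal.ofReal (4:ℝ) = 4 from by norm_num]
        refine le_of_eq ?_
        ring
    _ = (4 * ENNReal.ofReal R * volume (ball (0:E3) 1)) * ∑' n : ℕ, (2⁻¹:ℝ≥0∞) ^ n :=
        ENNReal.tsum_mul_left
    _ = 8 * ENNReal.ofReal R * volume (ball (0:E3) 1) := by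
        rw [geo_half]; ring

lemma L1wk_outer_sum {R : ℝ} (hR : 0 < R) :
    ∫⁻ x in (ball (0:E3) R)ᶜ, (((‖x‖₊ : ℝ≥0∞) ^ 2)⁻¹) ^ (2:ℝ) ∂volume ≤
      16 * (ENNReal.ofReal R)⁻¹ * volume (ball (0:E3) 1) := by
  calc ∫⁻ x in (ball (0:E3) R)ᶜ, (((‖x‖₊ : ℝ≥0∞) ^ 2)⁻¹) ^ (2:ℝ) ∂volume
      ≤ ∫⁻ x in ⋃ n : ℕ, (ball (0:E3) (R * (2:ℝ) ^ (n+1)) \ ball 0 (R * (2:ℝ) ^ n)),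
          (((‖x‖₊ : ℝ≥0∞) ^ 2)⁻¹) ^ (2:ℝ) ∂volume :=
        lintegral_mono_set (fun x hx => Set.mem_iUnion.mpr (cover_outer hR hx))
    _ ≤ ∑' n : ℕ, ∫⁻ x in ball (0:E3) (R * (2:ℝ) ^ (n+1)) \ ball 0 (R * (2:ℝ) ^ n),
          (((‖x‖₊ : ℝ≥0∞) ^ 2)⁻¹) ^ (2:ℝ) ∂volume := lintegral_iUnion_le _ _
    _ ≤ ∑' n : ℕ, (8 * (ENNReal.ofReal R)⁻¹ * volume (ball (0:E3) 1)) * (2⁻¹:ℝ≥0∞) ^ n := by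
        refine ENNReal.tsum_le_tsum fun n => ?_
        refine le_trans (annulus_bound 2 (by positivity) (by positivity)) ?_
        have hp : ((2:ℝ) ^ n) ≠ 0 := by positivity
        have harg : (((R * (2:ℝ) ^ n) ^ 2)⁻¹) ^ 2 * (R * (2:ℝ) ^ (n+1)) ^ 3
            = 8 * R⁻¹ * (2⁻¹:ℝ) ^ n := by
          rw [pow_succ, inv_pow]
          field_simp
          rw [one_div, inv_pow]
          field_simp
          ring
        rw [harg]
        rw [show (8:ℝ) * R⁻¹ * (2⁻¹:ℝ) ^ n = (8 * R⁻¹) * ((2⁻¹:ℝ) ^ n) from by ring,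
          ENNReal.ofReal_mul (by positivity), ENNReal.ofReal_pow (by norm_num), ofReal_half,
          ENNReal.ofReal_mul (by norm_num), ENNReal.ofReal_inv_of_pos hR]
        rw [show ENNReal.ofReal (8:ℝ) = 8 from by norm_num]
        refine le_of_eq ?_
        ring
    _ = (8 * (ENNReal.ofReal R)⁻¹ * volume (ball (0:E3) 1)) * ∑' n : ℕ, (2⁻¹:ℝ≥0∞) ^ n :=
        ENNReal.tsum_mul_left
    _ = 16 * (ENNReal.ofReal R)⁻¹ * volume (ball (0:E3) 1) := by
        rw [geo_half]; ring

lemma rpow_half_opt {A B : ℝ≥0∞} (hA0 : A ≠ 0) (hAt : A ≠ ⊤) :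
    (B / A) ^ ((1:ℝ)/2) * A = A ^ ((1:ℝ)/2) * B ^ ((1:ℝ)/2) := by
  have hA2 : A ^ ((1:ℝ)/2) * A ^ ((1:ℝ)/2) = A := by
    rw [← ENNReal.rpow_add _ _ hA0 hAt]; norm_num
  have hne0 : A ^ ((1:ℝ)/2) ≠ 0 := by
    simp [ENNReal.rpow_eq_zero_iff, hA0, hAt]
  have hnet : A ^ ((1:ℝ)/2) ≠ ⊤ := ENNReal.rpow_ne_top_of_nonneg (by norm_num) hAt
  have h1 : (A ^ ((1:ℝ)/2))⁻¹ * A = A ^ ((1:ℝ)/2) := by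
    calc (A ^ ((1:ℝ)/2))⁻¹ * A = (A ^ ((1:ℝ)/2))⁻¹ * (A ^ ((1:ℝ)/2) * A ^ ((1:ℝ)/2)) := by
          rw [hA2]
      _ = A ^ ((1:ℝ)/2) := by rw [← mul_assoc, ENNReal.inv_mul_cancel hne0 hnet, one_mul]
  rw [ENNReal.div_rpow_of_nonneg _ _ (by norm_num), div_eq_mul_inv, mul_assoc, h1, mul_comm]

lemma zero_case {f F : E3 → ℂ} (hFm : Measurable F)
    (hF : ∀ x : E3, x ≠ 0 → F x = 0 → f x = 0)
    (h0 : eLpNorm F 2 volume = 0) : eLpNorm f 1 volume = 0 := by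
  have hFa : F =ᵐ[(volume : Measure E3)] 0 :=
    (eLpNorm_eq_zero_iff hFm.aestronglyMeasurable (by norm_num)).mp h0
  have hne : ∀ᵐ x ∂(volume : Measure E3), x ≠ 0 := by
    rw [ae_iff]
    simpa using measure_singleton (0 : E3)
  have hfa : f =ᵐ[(volume : Measure E3)] 0 := by
    filter_upwards [hFa, hne] with x hx1 hx2
    exact hF x hx2 hx1
  rw [eLpNorm_congr_ae hfa, eLpNorm_zero]

/-- if `f : ℝ³ → ℂ` satisfies `‖x f‖_{L²} < ∞` and `‖|x|² f‖_{L²} < ∞`, then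
`‖f‖_{L¹(ℝ³)} ≲ ‖x f‖_{L²}^{1/2} ‖|x|² f‖_{L²}^{1/2}` with an absolute implicit constant. -/
theorem L1_interpolation_weights :
    ∃ C : ℝ≥0∞, C ≠ ⊤ ∧
      ∀ f : EuclideanSpace ℝ (Fin 3) → ℂ, Measurable f →
        eLpNorm (fun x => ‖x‖ • f x) 2 volume < ⊤ →
        eLpNorm (fun x => ‖x‖ ^ 2 • f x) 2 volume < ⊤ →
        eLpNorm f 1 volume ≤
          C * (eLpNorm (fun x => ‖x‖ • f x) 2 volume) ^ ((1 : ℝ) / 2) *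
            (eLpNorm (fun x => ‖x‖ ^ 2 • f x) 2 volume) ^ ((1 : ℝ) / 2) := by
  set v₁ : ℝ≥0∞ := volume (ball (0:E3) 1) with hv₁
  have hv₁t : v₁ ≠ ⊤ := by rw [hv₁]; exact measure_ball_lt_top.ne
  refine ⟨(8 * v₁) ^ ((1:ℝ)/2) + (16 * v₁) ^ ((1:ℝ)/2), ?_, ?_⟩
  · exact ENNReal.add_ne_top.mpr
      ⟨ENNReal.rpow_ne_top_of_nonneg (by norm_num) (ENNReal.mul_ne_top (by norm_num) hv₁t),
        ENNReal.rpow_ne_top_of_nonneg (by norm_num) (ENNReal.mul_ne_top (by norm_num) hv₁t)⟩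
  intro f hf hA hB
  set A := eLpNorm (fun x : E3 => ‖x‖ • f x) 2 volume with hAdef
  set B := eLpNorm (fun x : E3 => ‖x‖ ^ 2 • f x) 2 volume with hBdef
  have hF1m : Measurable fun x : E3 => ‖x‖ • f x := measurable_norm.smul hf
  have hF2m : Measurable fun x : E3 => ‖x‖ ^ 2 • f x := (measurable_norm.pow_const 2).smul hf
  have hF1 : ∀ x : E3, (‖‖x‖ • f x‖₊ : ℝ≥0∞) = (‖x‖₊ : ℝ≥0∞) ^ 1 * ‖f x‖₊ := by
    intro x; rw [nnnorm_smul, nnnorm_norm, ENNReal.coe_mul, pow_one]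
  have hF2 : ∀ x : E3, (‖‖x‖ ^ 2 • f x‖₊ : ℝ≥0∞) = (‖x‖₊ : ℝ≥0∞) ^ 2 * ‖f x‖₊ := by
    intro x; rw [nnnorm_smul, nnnorm_pow, nnnorm_norm, ENNReal.coe_mul, ENNReal.coe_pow]
  rcases eq_or_ne A 0 with hA0 | hA0
  · have h0 : eLpNorm f 1 volume = 0 := by
      refine zero_case hF1m (fun x hx hx0 => ?_) hA0
      rcases smul_eq_zero.mp hx0 with h | h
      · exact absurd h (norm_ne_zero_iff.mpr hx)
      · exact h
    rw [h0]; exact zero_le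
  rcases eq_or_ne B 0 with hB0 | hB0
  · have h0 : eLpNorm f 1 volume = 0 := by
      refine zero_case hF2m (fun x hx hx0 => ?_) hB0
      rcases smul_eq_zero.mp hx0 with h | h
      · exact absurd h (pow_ne_zero 2 (norm_ne_zero_iff.mpr hx))
      · exact h
    rw [h0]; exact zero_le
  have hAt : A ≠ ⊤ := hA.ne
  have hBt : B ≠ ⊤ := hB.ne
  have hBA0 : B / A ≠ 0 := by
    simp [ENNReal.div_eq_zero_iff, hB0, hAt]
  have hBAt : B / A ≠ ⊤ := (ENNReal.div_lt_top hBt hA0).ne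
  set R : ℝ := (B / A).toReal with hRdef
  have hRpos : 0 < R := ENNReal.toReal_pos hBA0 hBAt
  have hRof : ENNReal.ofReal R = B / A := ENNReal.ofReal_toReal hBAt
  have hsplit : eLpNorm f 1 volume =
      (∫⁻ x in ball (0:E3) R, (‖f x‖₊ : ℝ≥0∞) ∂volume) +
        ∫⁻ x in (ball (0:E3) R)ᶜ, (‖f x‖₊ : ℝ≥0∞) ∂volume := by
    rw [eLpNorm_one_eq_lintegral_enorm, ← lintegral_add_compl _ (measurableSet_ball
      (x := (0:E3)) (ε := R))]
    rfl
  have hdiff : (∫⁻ x in ball (0:E3) R, (‖f x‖₊ : ℝ≥0∞) ∂volume) =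
      ∫⁻ x in ball (0:E3) R \ {0}, (‖f x‖₊ : ℝ≥0∞) ∂volume := by
    refine (setLIntegral_congr ?_).symm
    refine diff_ae_eq_self.mpr ?_
    exact measure_mono_null Set.inter_subset_right (measure_singleton (0:E3))
  have hinner : ∫⁻ x in ball (0:E3) R \ {0}, (‖f x‖₊ : ℝ≥0∞) ∂volume ≤
      (8 * ENNReal.ofReal R * v₁) ^ ((1:ℝ)/2) * A := by
    refine le_trans (cs_step hf 1 hF1 (measurableSet_ball.diff (measurableSet_singleton _))
      (fun x hx => by simpa using hx.2)) ?_
    exact mul_le_mul_left (ENNReal.rpow_le_rpow (L1wk_inner_sum hRpos) (by norm_num)) _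
  have houter : ∫⁻ x in (ball (0:E3) R)ᶜ, (‖f x‖₊ : ℝ≥0∞) ∂volume ≤
      (16 * (ENNReal.ofReal R)⁻¹ * v₁) ^ ((1:ℝ)/2) * B := by
    refine le_trans (cs_step hf 2 hF2 measurableSet_ball.compl (fun x hx => ?_)) ?_
    · intro h0x
      exact hx (by rw [h0x]; exact mem_ball_self hRpos)
    · exact mul_le_mul_left (ENNReal.rpow_le_rpow (L1wk_outer_sum hRpos) (by norm_num)) _
  have hinv : (ENNReal.ofReal R)⁻¹ = A / B := by
    rw [hRof, ENNReal.inv_div (Or.inl hAt) (Or.inl hA0)]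
  calc eLpNorm f 1 volume
      = (∫⁻ x in ball (0:E3) R \ {0}, (‖f x‖₊ : ℝ≥0∞) ∂volume) +
        ∫⁻ x in (ball (0:E3) R)ᶜ, (‖f x‖₊ : ℝ≥0∞) ∂volume := by rw [hsplit, hdiff]
    _ ≤ (8 * ENNReal.ofReal R * v₁) ^ ((1:ℝ)/2) * A +
        (16 * (ENNReal.ofReal R)⁻¹ * v₁) ^ ((1:ℝ)/2) * B := add_le_add hinner houter
    _ = (8 * v₁) ^ ((1:ℝ)/2) * ((B / A) ^ ((1:ℝ)/2) * A) +
        (16 * v₁) ^ ((1:ℝ)/2) * ((A / B) ^ ((1:ℝ)/2) * B) := by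
        rw [hinv, hRof,
          show (8 : ℝ≥0∞) * (B / A) * v₁ = (8 * v₁) * (B / A) from by ring,
          show (16 : ℝ≥0∞) * (A / B) * v₁ = (16 * v₁) * (A / B) from by ring,
          ENNReal.mul_rpow_of_nonneg (8 * v₁) (B / A) (by norm_num),
          ENNReal.mul_rpow_of_nonneg (16 * v₁) (A / B) (by norm_num), mul_assoc, mul_assoc]
    _ = ((8 * v₁) ^ ((1:ℝ)/2) + (16 * v₁) ^ ((1:ℝ)/2)) * A ^ ((1:ℝ)/2) * B ^ ((1:ℝ)/2) := by
        rw [rpow_half_opt hA0 hAt, rpow_half_opt hB0 hBt]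
        ring
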